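/- arXiv:1411.0423 — 2 statements merged into one kernel-verified Lean document; each statement's English description precedes it below -/
import Mathlib

section
/- For any invertible linear map g on ℝ^d and unit vectors u, v ∈ ℝ^d, the angular distance satisfies d(g·ū, g·v̄) ≤ N(g)^4 · d(ū, v̄), where d(ū, v̄) = ‖u ∧ v‖/(‖u‖‖v‖) (equivalently, |sin| of the angle) and N(g) = max(‖g‖, ‖g⁻¹‖). -/
open scoped RealInnerProductSpace

/-- The angular (projective) distance `d(ū,v̄) = ‖u ∧ v‖/(‖u‖‖v‖)`, where
`‖u ∧ v‖ = √(‖u‖²‖v‖² - ⟪u,v⟫²)` is the area of the parallelogram spanned by `u` and `v`. -/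
noncomputable def projDist {d : ℕ} (u v : EuclideanSpace ℝ (Fin d)) : ℝ :=
  Real.sqrt (‖u‖ ^ 2 * ‖v‖ ^ 2 - ⟪u, v⟫ ^ 2) / (‖u‖ * ‖v‖)

/-- `N(g) = max(‖g‖, ‖g⁻¹‖)` for an invertible linear map `g` of `ℝ^d`. -/
noncomputable def matN {d : ℕ}
    (g : EuclideanSpace ℝ (Fin d) ≃L[ℝ] EuclideanSpace ℝ (Fin d)) : ℝ :=
  max ‖(g : EuclideanSpace ℝ (Fin d) →L[ℝ] EuclideanSpace ℝ (Fin d))‖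
    ‖(g.symm : EuclideanSpace ℝ (Fin d) →L[ℝ] EuclideanSpace ℝ (Fin d))‖

/-- Shear invariance of the Gram determinant. -/
lemma aux_shear {d : ℕ} (a b : EuclideanSpace ℝ (Fin d)) (t : ℝ) :
    ‖a‖ ^ 2 * ‖b + t • a‖ ^ 2 - ⟪a, b + t • a⟫ ^ 2
      = ‖a‖ ^ 2 * ‖b‖ ^ 2 - ⟪a, b⟫ ^ 2 := by
  have h : ∀ x : EuclideanSpace ℝ (Fin d), ‖x‖ ^ 2 = ⟪x, x⟫ := fun x =>
    (real_inner_self_eq_norm_sq x).symm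
  simp only [h, inner_add_left, inner_add_right, real_inner_smul_left,
    real_inner_smul_right, real_inner_comm a b]
  ring

set_option maxHeartbeats 1000000 in
/-- For `g ∈ GL(d,ℝ)` and unit vectors `u, v`,
`d(g·ū, g·v̄) ≤ N(g)⁴ · d(ū, v̄)`. -/
theorem stmt2 {d : ℕ} (g : EuclideanSpace ℝ (Fin d) ≃L[ℝ] EuclideanSpace ℝ (Fin d))
    (u v : EuclideanSpace ℝ (Fin d)) (hu : ‖u‖ = 1) (hv : ‖v‖ = 1) :
    projDist (g u) (g v) ≤ matN g ^ 4 * projDist u v := by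
  set N := matN g with hN
  have hgle : ‖(g : EuclideanSpace ℝ (Fin d) →L[ℝ] EuclideanSpace ℝ (Fin d))‖ ≤ N :=
    le_max_left _ _
  have hgile : ‖(g.symm : EuclideanSpace ℝ (Fin d) →L[ℝ] EuclideanSpace ℝ (Fin d))‖ ≤ N :=
    le_max_right _ _
  clear_value N
  set c : ℝ := ⟪u, v⟫ with hc
  set w : EuclideanSpace ℝ (Fin d) := v - c • u with hw
  have hvw : v = w + c • u := by rw [hw]; abel
  have hortho : ⟪u, w⟫ = 0 := by
    rw [hw, inner_sub_right, real_inner_smul_right, real_inner_self_eq_norm_sq, hu]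
    ring
  -- Pythagoras: 1 = ‖w‖² + c²
  have hpyth : ‖w‖ ^ 2 + c ^ 2 = 1 := by
    have := aux_shear u w c
    rw [← hvw, hu, hv, hortho] at this
    nlinarith
  -- projDist u v = ‖w‖
  have hPuv : projDist u v = ‖w‖ := by
    unfold projDist
    rw [hu, hv, ← hc]
    have : (1:ℝ) ^ 2 * 1 ^ 2 - c ^ 2 = ‖w‖ ^ 2 := by nlinarith
    rw [this, Real.sqrt_sq (norm_nonneg _)]
    simp
  -- norms of images
  have hbound : ∀ x : EuclideanSpace ℝ (Fin d), ‖g x‖ ≤ N * ‖x‖ := fun x =>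
    le_trans ((g : EuclideanSpace ℝ (Fin d) →L[ℝ] EuclideanSpace ℝ (Fin d)).le_opNorm x)
      (mul_le_mul_of_nonneg_right hgle (norm_nonneg _))
  have hlower : ∀ x : EuclideanSpace ℝ (Fin d), ‖x‖ ≤ N * ‖g x‖ := fun x => by
    have h1 : ‖g.symm (g x)‖ ≤ N * ‖g x‖ :=
      le_trans ((g.symm : EuclideanSpace ℝ (Fin d) →L[ℝ] EuclideanSpace ℝ (Fin d)).le_opNorm (g x))
        (mul_le_mul_of_nonneg_right hgile (norm_nonneg _))
    simpa using h1
  have hN0 : 0 ≤ N := le_trans (norm_nonneg _) hgle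
  have hN1 : 1 ≤ N := by
    have h1 : ‖v‖ ≤ N * ‖g v‖ := hlower v
    have h2 : ‖g v‖ ≤ N * ‖v‖ := hbound v
    rw [hv] at h1 h2
    nlinarith
  have hgv0 : 0 < ‖g v‖ := by
    have := hlower v; rw [hv] at this
    rcases (norm_nonneg (g v)).lt_or_eq with h | h
    · exact h
    · exfalso; rw [← h] at this; nlinarith
  have hgu0 : 0 < ‖g u‖ := by
    have := hlower u; rw [hu] at this
    rcases (norm_nonneg (g u)).lt_or_eq with h | h
    · exact h
    · exfalso; rw [← h] at this; nlinarith
  -- key numerator bound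
  have hnum : Real.sqrt (‖g u‖ ^ 2 * ‖g v‖ ^ 2 - ⟪g u, g v⟫ ^ 2) ≤ ‖g u‖ * ‖g w‖ := by
    have hgv : g v = g w + c • g u := by rw [hvw]; simp [map_add]
    have heq : ‖g u‖ ^ 2 * ‖g v‖ ^ 2 - ⟪g u, g v⟫ ^ 2
        = ‖g u‖ ^ 2 * ‖g w‖ ^ 2 - ⟪g u, g w⟫ ^ 2 := by
      rw [hgv]; exact aux_shear (g u) (g w) c
    rw [heq]
    calc Real.sqrt (‖g u‖ ^ 2 * ‖g w‖ ^ 2 - ⟪g u, g w⟫ ^ 2)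
        ≤ Real.sqrt ((‖g u‖ * ‖g w‖) ^ 2) := by
          apply Real.sqrt_le_sqrt; nlinarith [sq_nonneg (⟪g u, g w⟫ : ℝ)]
      _ = ‖g u‖ * ‖g w‖ := Real.sqrt_sq (by positivity)
  -- put it together
  have hmain : projDist (g u) (g v) ≤ ‖g w‖ / ‖g v‖ := by
    unfold projDist
    rw [div_le_div_iff₀ (by positivity) hgv0]
    have h2 := mul_le_mul_of_nonneg_right hnum hgv0.le
    calc Real.sqrt (‖g u‖ ^ 2 * ‖g v‖ ^ 2 - ⟪g u, g v⟫ ^ 2) * ‖g v‖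
        ≤ (‖g u‖ * ‖g w‖) * ‖g v‖ := h2
      _ = ‖g w‖ * (‖g u‖ * ‖g v‖) := by ring
  have hgw : ‖g w‖ ≤ N * ‖w‖ := hbound w
  have hinv : 1 / ‖g v‖ ≤ N := by
    rw [div_le_iff₀ hgv0]
    have := hlower v; rw [hv] at this; linarith
  have hfinal : ‖g w‖ / ‖g v‖ ≤ N ^ 2 * ‖w‖ := by
    have h1 : ‖g w‖ / ‖g v‖ = ‖g w‖ * (1 / ‖g v‖) := by ring
    rw [h1]
    calc ‖g w‖ * (1 / ‖g v‖) ≤ (N * ‖w‖) * N := by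
          apply mul_le_mul hgw hinv (by positivity) (by positivity)
      _ = N ^ 2 * ‖w‖ := by ring
  rw [hPuv]
  have hNsq : N ^ 2 ≤ N ^ 4 := by
    have h1 : 1 ≤ N ^ 2 := by nlinarith
    have h2 : 0 ≤ N ^ 2 * (N ^ 2 - 1) := mul_nonneg (sq_nonneg N) (by linarith)
    nlinarith
  have hN24 : N ^ 2 * ‖w‖ ≤ N ^ 4 * ‖w‖ :=
    mul_le_mul_of_nonneg_right hNsq (norm_nonneg w)
  linarith [hmain, hfinal]
end

section
/- For g, g' ∈ GL(d,ℝ) and any unit vector v ∈ ℝ^d, the projective distance satisfies d(g·v̄, g'·v̄) ≤ ‖g - g'‖ · (N(g) N(g'))^{1/2}, where N(g) = max(‖g‖, ‖g⁻¹‖). -/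
open scoped RealInnerProductSpace

lemma projDist_symm {d : ℕ} (a b : EuclideanSpace ℝ (Fin d)) :
    projDist a b = projDist b a := by
  unfold projDist
  rw [real_inner_comm, mul_comm (‖a‖ ^ 2), mul_comm ‖a‖]

lemma projDist_le_aux {d : ℕ} (a b : EuclideanSpace ℝ (Fin d)) (ha : a ≠ 0) (hb : b ≠ 0) :
    projDist a b ≤ ‖a - b‖ / ‖a‖ := by
  have ha' : 0 < ‖a‖ := norm_pos_iff.mpr ha
  have hb' : 0 < ‖b‖ := norm_pos_iff.mpr hb
  have key : ‖a‖ ^ 2 * ‖b‖ ^ 2 - ⟪a, b⟫ ^ 2 ≤ ‖a - b‖ ^ 2 * ‖b‖ ^ 2 := by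
    have h1 : ‖a - b‖ ^ 2 = ‖a‖ ^ 2 - 2 * ⟪a, b⟫ + ‖b‖ ^ 2 := norm_sub_sq_real a b
    nlinarith [sq_nonneg (⟪a, b⟫ - ‖b‖ ^ 2)]
  have h4 : Real.sqrt (‖a‖ ^ 2 * ‖b‖ ^ 2 - ⟪a, b⟫ ^ 2) ≤ ‖a - b‖ * ‖b‖ := by
    calc Real.sqrt (‖a‖ ^ 2 * ‖b‖ ^ 2 - ⟪a, b⟫ ^ 2)
        ≤ Real.sqrt (‖a - b‖ ^ 2 * ‖b‖ ^ 2) := Real.sqrt_le_sqrt key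
      _ = ‖a - b‖ * ‖b‖ := by
          rw [← mul_pow, Real.sqrt_sq (by positivity)]
  unfold projDist
  rw [show ‖a - b‖ / ‖a‖ = ‖a - b‖ * ‖b‖ / (‖a‖ * ‖b‖) by
    field_simp]
  exact (div_le_div_iff_of_pos_right (mul_pos ha' hb')).mpr h4

/-- For `g, g' ∈ GL(d,ℝ)` and a unit vector `v`,
`d(g·v̄, g'·v̄) ≤ ‖g - g'‖ (N(g)N(g'))^{1/2}`. -/
theorem stmt4 {d : ℕ}
    (g g' : EuclideanSpace ℝ (Fin d) ≃L[ℝ] EuclideanSpace ℝ (Fin d))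
    (v : EuclideanSpace ℝ (Fin d)) (hv : ‖v‖ = 1) :
    projDist (g v) (g' v) ≤
      ‖(g : EuclideanSpace ℝ (Fin d) →L[ℝ] EuclideanSpace ℝ (Fin d)) -
        (g' : EuclideanSpace ℝ (Fin d) →L[ℝ] EuclideanSpace ℝ (Fin d))‖ *
        Real.sqrt (matN g * matN g') := by
  set A := ‖(g : EuclideanSpace ℝ (Fin d) →L[ℝ] EuclideanSpace ℝ (Fin d)) -
        (g' : EuclideanSpace ℝ (Fin d) →L[ℝ] EuclideanSpace ℝ (Fin d))‖ with hA
  have hv0 : v ≠ 0 := by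
    intro h; rw [h, norm_zero] at hv; norm_num at hv
  have ha0 : g v ≠ 0 := by
    intro h
    exact hv0 (g.injective (by simp [h]))
  have hb0 : g' v ≠ 0 := by
    intro h
    exact hv0 (g'.injective (by simp [h]))
  have ha' : 0 < ‖g v‖ := norm_pos_iff.mpr ha0
  have hb' : 0 < ‖g' v‖ := norm_pos_iff.mpr hb0
  have hAnn : 0 ≤ A := norm_nonneg _
  -- ‖g v - g' v‖ ≤ A
  have hdiff : ‖g v - g' v‖ ≤ A := by
    have h1 : g v - g' v = ((g : EuclideanSpace ℝ (Fin d) →L[ℝ] EuclideanSpace ℝ (Fin d)) -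
        (g' : EuclideanSpace ℝ (Fin d) →L[ℝ] EuclideanSpace ℝ (Fin d))) v := by simp
    rw [h1]
    calc ‖(_ : EuclideanSpace ℝ (Fin d) →L[ℝ] EuclideanSpace ℝ (Fin d)) v‖ ≤ A * ‖v‖ :=
          ContinuousLinearMap.le_opNorm _ v
      _ = A := by rw [hv, mul_one]
  -- 1/‖g v‖ ≤ matN g
  have hinv : ∀ (h : EuclideanSpace ℝ (Fin d) ≃L[ℝ] EuclideanSpace ℝ (Fin d)),
      1 / ‖h v‖ ≤ matN h := by
    intro h
    have hh : (0:ℝ) < ‖h v‖ := norm_pos_iff.mpr (fun hz => hv0 (h.injective (by simp [hz])))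
    have : (1:ℝ) ≤ ‖(h.symm : EuclideanSpace ℝ (Fin d) →L[ℝ] EuclideanSpace ℝ (Fin d))‖ *
        ‖h v‖ := by
      calc (1:ℝ) = ‖v‖ := hv.symm
        _ = ‖h.symm (h v)‖ := by simp
        _ ≤ _ := ContinuousLinearMap.le_opNorm
            (h.symm : EuclideanSpace ℝ (Fin d) →L[ℝ] EuclideanSpace ℝ (Fin d)) (h v)
    have h2 : 1 / ‖h v‖ ≤
        ‖(h.symm : EuclideanSpace ℝ (Fin d) →L[ℝ] EuclideanSpace ℝ (Fin d))‖ :=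
      (div_le_iff₀ hh).mpr this
    exact h2.trans (le_max_right _ _)
  have hNg : 0 ≤ matN g := le_trans (norm_nonneg _) (le_max_left _ _)
  have hNg' : 0 ≤ matN g' := le_trans (norm_nonneg _) (le_max_left _ _)
  -- projDist ≤ A * matN g
  have key : ∀ x y : ℝ, 0 < x → 1 / x ≤ y → ‖g v - g' v‖ / x ≤ A * y := by
    intro x y hx hxy
    calc ‖g v - g' v‖ / x = ‖g v - g' v‖ * (1 / x) := by ring
      _ ≤ A * y := mul_le_mul hdiff hxy (by positivity) hAnn
  have h1 : projDist (g v) (g' v) ≤ A * matN g :=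
    (projDist_le_aux _ _ ha0 hb0).trans (key _ _ ha' (hinv g))
  have h2 : projDist (g v) (g' v) ≤ A * matN g' := by
    rw [projDist_symm]
    refine (projDist_le_aux _ _ hb0 ha0).trans ?_
    rw [norm_sub_rev]
    exact key _ _ hb' (hinv g')
  have hmin : min (matN g) (matN g') ≤ Real.sqrt (matN g * matN g') := by
    have hsq : min (matN g) (matN g') ^ 2 ≤ matN g * matN g' := by
      calc min (matN g) (matN g') ^ 2 = min (matN g) (matN g') * min (matN g) (matN g') := sq _
        _ ≤ matN g * matN g' :=
          mul_le_mul (min_le_left _ _) (min_le_right _ _) (le_min hNg hNg') hNg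
    have := Real.sqrt_le_sqrt hsq
    rwa [Real.sqrt_sq (le_min hNg hNg')] at this
  calc projDist (g v) (g' v) ≤ A * min (matN g) (matN g') := by
        rcases le_total (matN g) (matN g') with h | h
        · rw [min_eq_left h]; exact h1
        · rw [min_eq_right h]; exact h2
    _ ≤ A * Real.sqrt (matN g * matN g') := mul_le_mul_of_nonneg_left hmin hAnn
end
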